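/- Let p ≥ 1, n ≥ 2p, and let g be a directed graph on {1,…,n} with p edges whose 2p endpoints are pairwise distinct, no loops, and such that at least one pair of edges forms a 2-cycle, i.e. there exist distinct a,b with both (a,b) and (b,a) edges of g. If σ_n is a conjugation-invariant random permutation of {1,…,n}, then P(σ_n ∈ S_{n,g}) ≤ P(c_1(σ_n)=2)/( C(n−p, p)·p! ), where c_1(σ) is the length of the cycle of σ containing 1. -/

import Mathlib

open ENNReal

lemma exists_perm_comp {α β : Type*} [Fintype α] [Fintype β] [DecidableEq β]
    (f g : α → β) (hf : Function.Injective f) (hg : Function.Injective g) :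
    ∃ τ : Equiv.Perm β, ∀ a, τ (f a) = g a := by
  classical
  have hcard : Fintype.card ((Set.range f)ᶜ : Set β) = Fintype.card ((Set.range g)ᶜ : Set β) := by
    have h1 := Set.card_range_of_injective hf
    have h2 := Set.card_range_of_injective hg
    have c1 := Fintype.card_compl_set (Set.range f)
    have c2 := Fintype.card_compl_set (Set.range g)
    omega
  let ef : α ≃ Set.range f := Equiv.ofInjective f hf
  let eg : α ≃ Set.range g := Equiv.ofInjective g hg
  let ec : ((Set.range f)ᶜ : Set β) ≃ ((Set.range g)ᶜ : Set β) := Fintype.equivOfCardEq hcard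
  refine ⟨((Equiv.Set.sumCompl (Set.range f)).symm.trans
      (((ef.symm.trans eg).sumCongr ec).trans (Equiv.Set.sumCompl (Set.range g)))), fun a => ?_⟩
  simp only [Equiv.trans_apply]
  rw [Equiv.Set.sumCompl_symm_apply_of_mem (Set.mem_range_self a)]
  have : ef.symm ⟨f a, Set.mem_range_self a⟩ = a := ef.injective (by simp [ef])
  simp [this, eg]

/-- `g` is a graph whose nontrivial connected components are indexed by `Fin p`,
the `i`-th component having the two distinct vertices `x i`, `y i`; it always has
the edge `(x i, y i)`, and additionally the edge `(y i, x i)` when `i ∈ D`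
(so the components indexed by `D` are 2-cycles).  If `D` is nonempty (at least one
2-cycle), then for any conjugation-invariant random permutation,
`P(σ ∈ S_{n,g}) ≤ P(c_1(σ) = 2) / (C(n-p,p) p!)`. -/
theorem stmt13 {n p : ℕ} (hp : 1 ≤ p) (hn : 2 * p ≤ n)
    (x y : Fin p → Fin n)
    (hinj : Function.Injective (Sum.elim x y : Fin p ⊕ Fin p → Fin n))
    (D : Finset (Fin p)) (hD : D.Nonempty)
    (μ : PMF (Equiv.Perm (Fin n)))
    (hinv : ∀ τ : Equiv.Perm (Fin n), μ.map (fun σ => τ⁻¹ * σ * τ) = μ) :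
    μ.toOuterMeasure {σ | ∀ i : Fin p, σ (x i) = y i ∧ (i ∈ D → σ (y i) = x i)}
      ≤ μ.toOuterMeasure
          {σ | Function.minimalPeriod (⇑σ) (⟨0, by omega⟩ : Fin n) = 2}
        / (((n - p).choose p : ℝ≥0∞) * (p.factorial : ℝ≥0∞)) := by
  classical
  obtain ⟨i0, hi0⟩ := hD
  have hpn : p ≤ n := by omega
  set z : Fin n := ⟨0, by omega⟩ with hzdef
  set A : Set (Equiv.Perm (Fin n)) :=
    {σ | ∀ i : Fin p, σ (x i) = y i ∧ (i ∈ D → σ (y i) = x i)} with hAdef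
  set T : Set (Equiv.Perm (Fin n)) :=
    {σ | Function.minimalPeriod (⇑σ) z = 2} with hTdef
  set w : Fin p → Fin n := fun i => Equiv.swap (Fin.castLE hpn i0) z (Fin.castLE hpn i) with hwdef
  have hw : Function.Injective w := (Equiv.swap _ _).injective.comp (Fin.castLE_injective hpn)
  have hwi0 : w i0 = z := by simp [hwdef]
  set C : Set (Fin n) := (Set.range w)ᶜ with hCdef
  set E : (Fin p → Fin n) → Set (Equiv.Perm (Fin n)) :=
    fun v => {σ | ∀ i, σ (v i) = w i ∧ (i ∈ D → σ (w i) = v i)} with hEdef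
  set V : (Fin p ↪ C) → Fin p → Fin n := fun ι i => (ι i : Fin n) with hVdef
  have hVmem : ∀ (ι : Fin p ↪ C) i, V ι i ∈ C := fun ι i => (ι i).2
  have hVinj : ∀ ι : Fin p ↪ C, Function.Injective (Sum.elim (V ι) w) := by
    intro ι a b hab
    cases a with
    | inl a => cases b with
      | inl b =>
        simp only [Sum.elim_inl, hVdef] at hab
        exact congrArg Sum.inl (ι.injective (Subtype.ext hab))
      | inr b =>
        simp only [Sum.elim_inl, Sum.elim_inr] at hab
        exact absurd ⟨b, hab.symm⟩ (hVmem ι a)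
    | inr a => cases b with
      | inl b =>
        simp only [Sum.elim_inl, Sum.elim_inr] at hab
        exact absurd ⟨a, hab⟩ (hVmem ι b)
      | inr b =>
        simp only [Sum.elim_inr] at hab
        exact congrArg Sum.inr (hw hab)
  -- measure of each event equals measure of A
  have hμE : ∀ ι : Fin p ↪ C, μ.toOuterMeasure (E (V ι)) = μ.toOuterMeasure A := by
    intro ι
    obtain ⟨τ, hτ⟩ := exists_perm_comp (Sum.elim x y) (Sum.elim (V ι) w) hinj (hVinj ι)
    have hτx : ∀ i, τ (x i) = V ι i := fun i => hτ (Sum.inl i)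
    have hτy : ∀ i, τ (y i) = w i := fun i => hτ (Sum.inr i)
    have hiff : ∀ (σ : Equiv.Perm (Fin n)) (a b : Fin n),
        (τ⁻¹ * σ * τ) a = b ↔ σ (τ a) = τ b := by
      intro σ a b
      simp [Equiv.Perm.mul_apply, Equiv.Perm.inv_def, Equiv.symm_apply_eq]
    have hpre : (fun σ => τ⁻¹ * σ * τ) ⁻¹' A = E (V ι) := by
      ext σ
      simp only [Set.mem_preimage, hAdef, hEdef, Set.mem_setOf_eq, hiff, hτx, hτy]
    calc μ.toOuterMeasure (E (V ι))
        = μ.toOuterMeasure ((fun σ => τ⁻¹ * σ * τ) ⁻¹' A) := by rw [hpre]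
      _ = (μ.map (fun σ => τ⁻¹ * σ * τ)).toOuterMeasure A :=
          (PMF.toOuterMeasure_map_apply _ _ _).symm
      _ = μ.toOuterMeasure A := by rw [hinv τ]
  -- each event is inside T
  have hsub : ∀ ι : Fin p ↪ C, E (V ι) ⊆ T := by
    intro ι σ hσ
    obtain ⟨h1, h2⟩ := hσ i0
    have h2 := h2 hi0
    rw [hwi0] at h1 h2
    have hne : V ι i0 ≠ z := by
      intro h
      exact (hVmem ι i0) (h ▸ hwi0 ▸ Set.mem_range_self i0)
    have hper : Function.IsPeriodicPt (⇑σ) 2 z := by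
      show (⇑σ)^[2] z = z
      simp [Function.iterate_succ_apply', h2, h1]
    have hfix : ¬ Function.IsFixedPt (⇑σ) z := by
      intro h
      exact hne (by rw [← h2]; exact h)
    have hdvd := hper.minimalPeriod_dvd
    rcases Nat.prime_two.eq_one_or_self_of_dvd _ hdvd with h | h
    · exact absurd (Function.minimalPeriod_eq_one_iff_isFixedPt.mp h) hfix
    · exact h
  -- pointwise disjointness bound
  have hpt : ∀ σ, (∑ ι : Fin p ↪ C, (E (V ι)).indicator (⇑μ) σ) ≤ T.indicator (⇑μ) σ := by
    intro σ
    by_cases h : ∃ ι : Fin p ↪ C, σ ∈ E (V ι)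
    · obtain ⟨ι0, h0⟩ := h
      have hzero : ∀ ι ∈ Finset.univ, ι ≠ ι0 → (E (V ι)).indicator (⇑μ) σ = 0 := by
        intro ι _ hne
        rw [Set.indicator_of_notMem]
        intro hσ
        apply hne
        apply Function.Embedding.ext
        intro i
        have : V ι i = V ι0 i := σ.injective (((hσ i).1).trans ((h0 i).1).symm)
        exact Subtype.ext this
      rw [Finset.sum_eq_single_of_mem ι0 (Finset.mem_univ _) hzero,
        Set.indicator_of_mem h0, Set.indicator_of_mem (hsub ι0 h0)]
    · push_neg at h
      rw [Finset.sum_eq_zero fun ι _ => Set.indicator_of_notMem (h ι) _]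
      exact zero_le
  -- summation
  have hsum : (Fintype.card (Fin p ↪ C) : ℝ≥0∞) * μ.toOuterMeasure A ≤ μ.toOuterMeasure T := by
    calc (Fintype.card (Fin p ↪ C) : ℝ≥0∞) * μ.toOuterMeasure A
        = ∑ ι : Fin p ↪ C, μ.toOuterMeasure (E (V ι)) := by
          simp [hμE, Finset.sum_const, nsmul_eq_mul, Finset.card_univ]
      _ = ∑ ι : Fin p ↪ C, ∑' σ, (E (V ι)).indicator (⇑μ) σ := by
          simp only [PMF.toOuterMeasure_apply]
      _ = ∑' σ, ∑ ι : Fin p ↪ C, (E (V ι)).indicator (⇑μ) σ :=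
          (Summable.tsum_finsetSum fun _ _ => ENNReal.summable).symm
      _ ≤ ∑' σ, T.indicator (⇑μ) σ := ENNReal.tsum_le_tsum hpt
      _ = μ.toOuterMeasure T := (PMF.toOuterMeasure_apply μ T).symm
  -- cardinality
  have hcC : Fintype.card C = n - p := by
    have h := Fintype.card_compl_set (Set.range w)
    rw [Set.card_range_of_injective hw, Fintype.card_fin] at h
    simp only [Fintype.card_fin] at h
    rw [← h]
  have hcard : Fintype.card (Fin p ↪ C) = (n - p).choose p * p.factorial := by
    rw [Fintype.card_embedding_eq, hcC, Fintype.card_fin,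
      Nat.descFactorial_eq_factorial_mul_choose, mul_comm]
  have hne0 : (((n - p).choose p : ℝ≥0∞) * (p.factorial : ℝ≥0∞)) ≠ 0 := by
    apply mul_ne_zero
    · exact Nat.cast_ne_zero.mpr (Nat.choose_pos (by omega : p ≤ n - p)).ne'
    · simp [Nat.factorial_ne_zero]
  have hnetop : (((n - p).choose p : ℝ≥0∞) * (p.factorial : ℝ≥0∞)) ≠ ⊤ :=
    ENNReal.mul_ne_top (ENNReal.natCast_ne_top _) (ENNReal.natCast_ne_top _)
  rw [ENNReal.le_div_iff_mul_le (Or.inl hne0) (Or.inl hnetop)]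
  calc μ.toOuterMeasure A * (((n - p).choose p : ℝ≥0∞) * (p.factorial : ℝ≥0∞))
      = (Fintype.card (Fin p ↪ C) : ℝ≥0∞) * μ.toOuterMeasure A := by
        rw [hcard]; push_cast; ring
    _ ≤ μ.toOuterMeasure T := hsum
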